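/- If φ ∈ Φ_ex and the right derivative φ'_+ exists, then limsup_{x→∞} φ'_+(x)/φ(x) ≤ γ_φ − 1. -/

import Mathlib

open Set Filter Topology

/-- `Φ`: convex, strictly increasing bijections of `[0,∞)` (with `φ 0 = 0`). -/
def Phi (φ : ℝ → ℝ) : Prop :=
  ConvexOn ℝ (Ici 0) φ ∧ StrictMonoOn φ (Ici 0) ∧
    Set.BijOn φ (Ici 0) (Ici 0) ∧ φ 0 = 0

/-- `γ_φ = sup_{x ≥ 0} φ(1+x)/(φ(1)+φ(x))`, valued in `[0,∞]`. -/
noncomputable def gam (φ : ℝ → ℝ) : ENNReal :=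
  ⨆ x : Ici (0:ℝ), ENNReal.ofReal (φ (1 + x) / (φ 1 + φ x))

/-- If `φ ∈ Φ_ex` with `γ_φ = γ` and `φ'` is the right derivative of `φ`,
then `limsup_{x→∞} φ'(x)/φ(x) ≤ γ − 1`. -/
theorem stmt_14 (φ φ' : ℝ → ℝ) (hφ : Phi φ) (γ : ℝ)
    (hγ : gam φ = ENNReal.ofReal γ) (hγ1 : 1 ≤ γ)
    (hderiv : ∀ x : ℝ, 0 ≤ x → HasDerivWithinAt φ (φ' x) (Ici x) x) :
    Filter.limsup (fun x : ℝ => φ' x / φ x) Filter.atTop ≤ γ - 1 := by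
  obtain ⟨hconv, hmono, hbij, h0⟩ := hφ
  have hφ1 : 0 < φ 1 := by
    have := hmono (Set.mem_Ici.mpr (le_refl 0)) (show (1:ℝ) ∈ Ici 0 by norm_num) zero_lt_one
    simpa [h0] using this
  -- φ tends to atTop
  have htend : Tendsto φ atTop atTop := by
    rw [tendsto_atTop_atTop]
    intro b
    obtain ⟨x, hx, hφx⟩ := hbij.surjOn (show max b 0 ∈ Ici 0 from Set.mem_Ici.mpr (le_max_right _ _))
    refine ⟨x, fun a ha => ?_⟩
    have : φ x ≤ φ a := hmono.monotoneOn hx (le_trans hx ha) ha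
    calc b ≤ max b 0 := le_max_left _ _
      _ = φ x := hφx.symm
      _ ≤ φ a := this
  -- right derivative bounded by slope over [x, x+1]
  have hslope : ∀ x : ℝ, 0 ≤ x → φ' x ≤ φ (x + 1) - φ x := by
    intro x hx
    have h := hderiv x hx
    rw [hasDerivWithinAt_iff_tendsto_slope] at h
    have hIoi : Ici x \ {x} = Ioi x := by
      ext y; simp [lt_iff_le_and_ne, eq_comm]
    rw [hIoi] at h
    refine le_of_tendsto h ?_
    filter_upwards [Ioo_mem_nhdsGT_of_mem (show x ∈ Ico x (x + 1) by
      constructor <;> [exact le_refl x; linarith])] with y hy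
    have h2 := hconv.secant_mono_aux2 (show x ∈ Ici 0 from hx)
      (show x + 1 ∈ Ici (0:ℝ) by simp; linarith) hy.1 hy.2
    have : (φ (x + 1) - φ x) / (x + 1 - x) = φ (x + 1) - φ x := by
      norm_num
    rw [this] at h2
    simpa [slope_def_field] using h2
  -- right derivative is nonnegative
  have hd0 : ∀ x : ℝ, 0 ≤ x → 0 ≤ φ' x := by
    intro x hx
    have h := hderiv x hx
    rw [hasDerivWithinAt_iff_tendsto_slope] at h
    have hIoi : Ici x \ {x} = Ioi x := by
      ext y; simp [lt_iff_le_and_ne, eq_comm]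
    rw [hIoi] at h
    refine ge_of_tendsto h ?_
    filter_upwards [self_mem_nhdsWithin] with y (hy : x < y)
    have hxy : φ x ≤ φ y := hmono.monotoneOn hx (le_trans hx hy.le) hy.le
    have : 0 < y - x := by linarith
    rw [slope_def_field]
    apply div_nonneg <;> linarith
  -- bound from γ
  have hgam : ∀ x : ℝ, 0 ≤ x → φ (1 + x) ≤ γ * (φ 1 + φ x) := by
    intro x hx
    have hle : ENNReal.ofReal (φ (1 + x) / (φ 1 + φ x)) ≤ ENNReal.ofReal γ := by
      rw [← hγ]
      exact le_iSup (fun y : Ici (0:ℝ) => ENNReal.ofReal (φ (1 + ↑y) / (φ 1 + φ ↑y))) ⟨x, hx⟩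
    have hφx : 0 ≤ φ x := by
      rcases eq_or_lt_of_le hx with h | h
      · simp [← h, h0]
      · have := hmono (Set.mem_Ici.mpr (le_refl 0)) (le_of_lt h) h
        simp [h0] at this; linarith
    have hpos : 0 < φ 1 + φ x := by linarith
    have hdivle : φ (1 + x) / (φ 1 + φ x) ≤ γ :=
      (ENNReal.ofReal_le_ofReal_iff (by linarith)).mp hle
    calc φ (1 + x) = φ (1 + x) / (φ 1 + φ x) * (φ 1 + φ x) := by field_simp
      _ ≤ γ * (φ 1 + φ x) := by
          apply mul_le_mul_of_nonneg_right hdivle (le_of_lt hpos)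
  -- the comparison function
  set g : ℝ → ℝ := fun x => γ * φ 1 / φ x + (γ - 1) with hg_def
  have hg_tendsto : Tendsto g atTop (𝓝 (γ - 1)) := by
    have h1 : Tendsto (fun x => γ * φ 1 / φ x) atTop (𝓝 0) :=
      Tendsto.div_atTop tendsto_const_nhds htend
    have := h1.add (tendsto_const_nhds (x := γ - 1))
    simpa using this
  have hev : ∀ᶠ x in atTop, φ' x / φ x ≤ g x := by
    filter_upwards [eventually_ge_atTop (1:ℝ)] with x hx1
    have hx0 : (0:ℝ) ≤ x := by linarith
    have hφx : 0 < φ x := by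
      have := hmono (Set.mem_Ici.mpr (le_refl 0)) (show x ∈ Ici (0:ℝ) from hx0)
        (lt_of_lt_of_le zero_lt_one hx1)
      simpa [h0] using this
    have h1 := hslope x hx0
    have h2 := hgam x hx0
    rw [add_comm 1 x] at h2
    have step1 : φ' x / φ x ≤ (φ (x + 1) - φ x) / φ x := by gcongr
    have step2 : (φ (x + 1) - φ x) / φ x ≤ g x := by
      have heq : g x = (γ * φ 1 + (γ - 1) * φ x) / φ x := by
        simp only [hg_def]; field_simp
      rw [heq]
      gcongr
      linarith
    exact step1.trans step2
  -- coboundedness and boundedness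
  have hφ1x : ∀ᶠ x in atTop, φ' x / φ x ≤ γ + (γ - 1) := by
    filter_upwards [hev, eventually_ge_atTop (1:ℝ)] with x hx hx1
    have hφxpos : 0 < φ x := by
      have := hmono (Set.mem_Ici.mpr (le_refl 0)) (show x ∈ Ici (0:ℝ) by simp; linarith)
        (lt_of_lt_of_le zero_lt_one hx1)
      simpa [h0] using this
    have hφ1x : φ 1 ≤ φ x := hmono.monotoneOn (by norm_num) (by simp; linarith) hx1
    have : γ * φ 1 / φ x ≤ γ := by
      rw [div_le_iff₀ hφxpos]
      have : γ * φ 1 ≤ γ * φ x := by nlinarith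
      nlinarith
    have hgle : g x ≤ γ + (γ - 1) := by
      simp only [hg_def]; linarith
    exact hx.trans hgle
  have hco : IsCoboundedUnder (· ≤ ·) atTop (fun x : ℝ => φ' x / φ x) := by
    apply isCoboundedUnder_le_of_eventually_le atTop (x := 0)
    filter_upwards [eventually_ge_atTop (1:ℝ)] with x hx1
    have hx0 : (0:ℝ) ≤ x := by linarith
    have hφx : 0 < φ x := by
      have := hmono (Set.mem_Ici.mpr (le_refl 0)) (show x ∈ Ici (0:ℝ) from hx0)
        (lt_of_lt_of_le zero_lt_one hx1)
      simpa [h0] using this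
    have := hd0 x hx0
    positivity
  have hbdd : IsBoundedUnder (· ≤ ·) atTop g := hg_tendsto.isBoundedUnder_le
  calc Filter.limsup (fun x : ℝ => φ' x / φ x) Filter.atTop
      ≤ Filter.limsup g Filter.atTop := limsup_le_limsup hev hco hbdd
    _ = γ - 1 := hg_tendsto.limsup_eq
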